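/- Every locally quasi-convex abelian topological group (G,τ) admits a quasi-Mackey topology: there exists a locally quasi-convex group topology μ on G that is compatible with τ and such that there is no locally quasi-convex group topology ν on G compatible with τ with μ < ν (μ strictly coarser than ν). -/

import Mathlib

open Filter Topology

noncomputable section

/-- `𝕊₊ = {z ∈ 𝕊 : Re z ≥ 0}`. -/
def SPlus : Set Circle := {z : Circle | 0 ≤ (z : ℂ).re}

/-- A character of an abelian group `G` is a homomorphism `G → 𝕊`. -/
def IsChar {G : Type*} [AddCommGroup G] (χ : G → Circle) : Prop :=
  ∀ x y : G, χ (x + y) = χ x * χ y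

/-- Two topologies on an abelian group `G` are *compatible* if they have the same
continuous characters `G → 𝕊`. -/
def Compatible {G : Type*} [AddCommGroup G] (t₁ t₂ : TopologicalSpace G) : Prop :=
  ∀ χ : G → Circle, IsChar χ →
    (@Continuous G Circle t₁ _ χ ↔ @Continuous G Circle t₂ _ χ)

/-- A subset `A` of a topological abelian group is *quasi-convex* if for every `g ∉ A`
there is a continuous character `χ` with `χ(A) ⊆ 𝕊₊` and `χ(g) ∉ 𝕊₊`. -/
def IsQuasiConvex {G : Type*} [AddCommGroup G] (t : TopologicalSpace G) (A : Set G) : Prop :=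
  ∀ g : G, g ∉ A → ∃ χ : G → Circle, IsChar χ ∧ @Continuous G Circle t _ χ ∧
    (∀ a ∈ A, χ a ∈ SPlus) ∧ χ g ∉ SPlus

/-- A topological abelian group is *locally quasi-convex* if it has a neighborhood base
at `0` consisting of quasi-convex sets. -/
def LocallyQuasiConvex {G : Type*} [AddCommGroup G] (t : TopologicalSpace G) : Prop :=
  ∀ U ∈ @nhds G t 0, ∃ V ∈ @nhds G t 0, V ⊆ U ∧ IsQuasiConvex t V


section QuasiMackeyAux

open Real

variable {G : Type*} [AddCommGroup G]

lemma IsChar.map_zero' {χ : G → Circle} (hχ : IsChar χ) : χ 0 = 1 := by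
  have h := hχ 0 0
  rw [add_zero] at h
  exact (left_eq_mul.mp h)

lemma IsChar.map_nsmul' {χ : G → Circle} (hχ : IsChar χ) (k : ℕ) (x : G) :
    χ (k • x) = χ x ^ k := by
  induction k with
  | zero => simpa using hχ.map_zero'
  | succ m ih => rw [succ_nsmul, hχ, ih, pow_succ]

lemma quasiMackey_pow_re_eq (z : Circle) (k : ℕ) :
    ((z ^ k : Circle) : ℂ).re = Real.cos (k * Complex.arg z) := by
  have h1 : ((z ^ k : Circle) : ℂ) = (z : ℂ) ^ k := map_pow Circle.coeHom z k
  rw [h1]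
  conv_lhs => rw [← Circle.exp_arg z]
  rw [Circle.coe_exp, ← Complex.exp_nat_mul]
  rw [show (k : ℂ) * (((Complex.arg z : ℝ)) * Complex.I)
      = ((k * Complex.arg z : ℝ) : ℂ) * Complex.I by push_cast; ring]
  exact Complex.exp_ofReal_mul_I_re _

/-- Sets of the form `{z | z, z², …, zⁿ ∈ 𝕊₊}` are a neighborhood basis at `1` in `𝕊`. -/
lemma quasiMackey_circle_basis {N : Set Circle} (hN : N ∈ 𝓝 (1 : Circle)) :
    ∃ n : ℕ, 0 < n ∧ ∀ z : Circle,
      (∀ k : ℕ, 0 < k → k ≤ n → 0 ≤ ((z ^ k : Circle) : ℂ).re) → z ∈ N := by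
  have hc : ContinuousAt Circle.exp 0 := Circle.exp.continuous.continuousAt
  have hpre : Circle.exp ⁻¹' N ∈ 𝓝 (0 : ℝ) := by
    apply hc
    rwa [Circle.exp_zero]
  obtain ⟨δ, hδ, hball⟩ := Metric.mem_nhds_iff.mp hpre
  obtain ⟨n, hn⟩ := exists_nat_gt (π / (2 * δ))
  have hπ := Real.pi_pos
  refine ⟨n + 1, Nat.succ_pos _, fun z hz => ?_⟩
  set θ := Complex.arg z with hθdef
  have hθπ : |θ| ≤ π := Complex.abs_arg_le_pi _
  have key : |θ| ≤ π / (2 * (n + 1)) := by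
    by_contra hcon
    push_neg at hcon
    have hnpos : (0:ℝ) < 2 * (n + 1) := by positivity
    have hP : π / 2 < (n + 1 : ℕ) * |θ| := by
      have := (div_lt_iff₀ hnpos).mp hcon
      push_cast
      nlinarith
    have hex : ∃ k : ℕ, π / 2 < k * |θ| := ⟨n + 1, hP⟩
    classical
    set k := Nat.find hex with hk
    have hk1 : π / 2 < k * |θ| := Nat.find_spec hex
    have hkpos : 0 < k := by
      rcases Nat.eq_zero_or_pos k with h | h
      · exfalso; rw [h] at hk1; simp at hk1; linarith
      · exact h
    have hkle : k ≤ n + 1 := Nat.find_le hP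
    have hkm : ¬ (π / 2 < (k - 1 : ℕ) * |θ|) := Nat.find_min hex (Nat.sub_lt hkpos one_pos)
    push_neg at hkm
    have hub : (k : ℝ) * |θ| ≤ π := by
      rcases eq_or_lt_of_le (Nat.one_le_iff_ne_zero.mpr hkpos.ne') with h1 | h2
      · rw [← h1]; simpa using hθπ
      · have h1le : (1:ℕ) ≤ k - 1 := by omega
        have habs : (0:ℝ) ≤ |θ| := abs_nonneg _
        have hθhalf : |θ| ≤ π / 2 := by
          calc |θ| = (1:ℝ) * |θ| := (one_mul _).symm
          _ ≤ ((k - 1 : ℕ) : ℝ) * |θ| := by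
              apply mul_le_mul_of_nonneg_right _ habs
              exact_mod_cast h1le
          _ ≤ π / 2 := hkm
        have hsplit : (k : ℝ) = ((k - 1 : ℕ) : ℝ) + 1 := by
          push_cast [Nat.cast_sub (by omega : 1 ≤ k)]; ring
        rw [hsplit, add_mul, one_mul]
        linarith [hkm]
    have hcosneg : Real.cos (k * |θ|) < 0 :=
      Real.cos_neg_of_pi_div_two_lt_of_lt hk1 (by linarith)
    have h0 : 0 ≤ ((z ^ k : Circle) : ℂ).re := hz k hkpos hkle
    rw [quasiMackey_pow_re_eq] at h0
    have hcc : Real.cos ((k : ℝ) * θ) = Real.cos ((k : ℝ) * |θ|) := by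
      rcases abs_cases θ with ⟨h, _⟩ | ⟨h, _⟩
      · rw [h]
      · rw [h, mul_neg, Real.cos_neg]
    rw [← hθdef, hcc] at h0
    linarith
  have hlt : |θ| < δ := by
    have h2 : π / (2 * (n + 1)) < δ := by
      rw [div_lt_iff₀ (by positivity)]
      have := (div_lt_iff₀ (by positivity : (0:ℝ) < 2 * δ)).mp hn
      nlinarith
    linarith
  have hmem : θ ∈ Metric.ball (0 : ℝ) δ := by simpa [Real.dist_eq] using hlt
  have := hball hmem
  rwa [Set.mem_preimage, Circle.exp_arg] at this

/-- A character mapping some neighborhood of `0` into `𝕊₊` is continuous. -/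
lemma quasiMackey_continuous_of_sPlus_nhds {t : TopologicalSpace G}
    (ht : @IsTopologicalAddGroup G t _)
    {χ : G → Circle} (hχ : IsChar χ) {W : Set G} (hW : W ∈ @nhds G t 0)
    (hWS : ∀ w ∈ W, χ w ∈ SPlus) : @Continuous G Circle t _ χ := by
  letI := t
  haveI := ht
  have hat : ContinuousAt χ 0 := by
    rw [ContinuousAt, hχ.map_zero']
    intro N hN
    obtain ⟨n, hn, hbasis⟩ := quasiMackey_circle_basis hN
    have hV : (⋂ k ∈ Finset.Icc 1 n, (fun x : G => k • x) ⁻¹' W) ∈ 𝓝 (0 : G) := by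
      apply (Filter.biInter_finset_mem _).mpr
      intro k _
      apply ContinuousAt.preimage_mem_nhds (Continuous.continuousAt (continuous_nsmul k))
      rwa [smul_zero]
    apply mem_of_superset hV
    intro v hv
    apply hbasis
    intro k hk1 hk2
    have hvk : k • v ∈ W := Set.mem_iInter₂.mp hv k (Finset.mem_Icc.mpr ⟨hk1, hk2⟩)
    have := hWS _ hvk
    rwa [hχ.map_nsmul'] at this
  let f : G →+ Additive Circle :=
    AddMonoidHom.mk' (fun x => Additive.ofMul (χ x)) (fun a b => congrArg Additive.ofMul (hχ a b))
  have hf : Continuous f := continuous_of_continuousAt_zero f hat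
  exact hf

lemma quasiMackey_sPlus_mem_nhds : SPlus ∈ 𝓝 (1 : Circle) := by
  have hc : Continuous fun z : Circle => (z : ℂ).re :=
    Complex.continuous_re.comp continuous_subtype_val
  have ho : IsOpen {z : Circle | 0 < (z : ℂ).re} := isOpen_lt continuous_const hc
  have h1 : (1 : Circle) ∈ {z : Circle | 0 < (z : ℂ).re} := by simp [Circle.coe_one]
  exact mem_of_superset (ho.mem_nhds h1) (fun z hz => (le_of_lt hz : (0:ℝ) ≤ _))

end QuasiMackeyAux

/-- Every locally quasi-convex abelian topological group `(G, τ)` admits a quasi-Mackey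
topology: a locally quasi-convex group topology `μ` compatible with `τ` such that no
locally quasi-convex group topology `ν` compatible with `τ` is strictly finer than `μ`
(i.e. with every `μ`-open set `ν`-open and `ν ≠ μ`). -/
theorem exists_quasiMackey {G : Type*} [AddCommGroup G] (τ : AddGroupTopology G)
    (hτ : LocallyQuasiConvex τ.toTopologicalSpace) :
    ∃ μ : AddGroupTopology G, LocallyQuasiConvex μ.toTopologicalSpace ∧
      Compatible μ.toTopologicalSpace τ.toTopologicalSpace ∧
      ¬ ∃ ν : AddGroupTopology G, LocallyQuasiConvex ν.toTopologicalSpace ∧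
          Compatible ν.toTopologicalSpace τ.toTopologicalSpace ∧
          (∀ U : Set G, IsOpen[μ.toTopologicalSpace] U → IsOpen[ν.toTopologicalSpace] U) ∧
          μ.toTopologicalSpace ≠ ν.toTopologicalSpace := by
  classical
  set S : Set (AddGroupTopology G) :=
    {t | LocallyQuasiConvex t.toTopologicalSpace ∧
         Compatible t.toTopologicalSpace τ.toTopologicalSpace} with hSdef
  have hτS : τ ∈ S := ⟨hτ, fun χ _ => Iff.rfl⟩
  have hInf : ∀ c ⊆ S, IsChain (· ≤ ·) c → c.Nonempty → sInf c ∈ S ∧ ∀ z ∈ c, sInf c ≤ z := by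
    intro c hcS hchain hne
    have hle : ∀ z ∈ c, sInf c ≤ z := fun z hz => sInf_le hz
    set m := sInf c with hm
    have hmt : m.toTopologicalSpace = sInf (AddGroupTopology.toTopologicalSpace '' c) :=
      AddGroupTopology.toTopologicalSpace_sInf c
    have hdir : DirectedOn ((fun t : TopologicalSpace G => @nhds G t 0) ⁻¹'o (· ≥ ·))
        (AddGroupTopology.toTopologicalSpace '' c) := by
      rintro _ ⟨x, hx, rfl⟩ _ ⟨y, hy, rfl⟩
      rcases hchain.total hx hy with h | h
      · exact ⟨x.toTopologicalSpace, ⟨x, hx, rfl⟩, le_refl _,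
          nhds_mono (AddGroupTopology.toTopologicalSpace_le.mpr h)⟩
      · exact ⟨y.toTopologicalSpace, ⟨y, hy, rfl⟩,
          nhds_mono (AddGroupTopology.toTopologicalSpace_le.mpr h), le_refl _⟩
    have hnhds : ∀ U : Set G, U ∈ @nhds G m.toTopologicalSpace 0 ↔
        ∃ ν ∈ c, U ∈ @nhds G ν.toTopologicalSpace 0 := by
      intro U
      rw [hmt, nhds_sInf, mem_biInf_of_directed hdir (hne.image _)]
      constructor
      · rintro ⟨_, ⟨ν, hν, rfl⟩, hU⟩; exact ⟨ν, hν, hU⟩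
      · rintro ⟨ν, hν, hU⟩; exact ⟨ν.toTopologicalSpace, ⟨ν, hν, rfl⟩, hU⟩
    have hcontmono : ∀ ν ∈ c, ∀ χ : G → Circle,
        @Continuous G Circle ν.toTopologicalSpace _ χ →
        @Continuous G Circle m.toTopologicalSpace _ χ := by
      intro ν hν χ h
      exact continuous_le_dom (AddGroupTopology.toTopologicalSpace_le.mpr (hle ν hν)) h
    refine ⟨⟨?_, ?_⟩, hle⟩
    · -- local quasi-convexity of the infimum
      intro U hU
      obtain ⟨ν, hν, hUν⟩ := (hnhds U).mp hU
      obtain ⟨V, hV, hVU, hVqc⟩ := (hcS hν).1 U hUν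
      refine ⟨V, (hnhds V).mpr ⟨ν, hν, hV⟩, hVU, ?_⟩
      intro g hg
      obtain ⟨χ, h1, h2, h3, h4⟩ := hVqc g hg
      exact ⟨χ, h1, hcontmono ν hν χ h2, h3, h4⟩
    · -- compatibility of the infimum
      intro χ hχ
      constructor
      · intro hcont
        have hS1 : χ ⁻¹' SPlus ∈ @nhds G m.toTopologicalSpace 0 :=
          @ContinuousAt.preimage_mem_nhds G Circle m.toTopologicalSpace _ χ 0 SPlus
            (@Continuous.continuousAt G Circle m.toTopologicalSpace _ χ 0 hcont)
            (by rw [hχ.map_zero']; exact quasiMackey_sPlus_mem_nhds)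
        obtain ⟨ν, hν, hWν⟩ := (hnhds _).mp hS1
        have hcν : @Continuous G Circle ν.toTopologicalSpace _ χ :=
          quasiMackey_continuous_of_sPlus_nhds ν.toIsTopologicalAddGroup hχ hWν (fun w hw => hw)
        exact ((hcS hν).2 χ hχ).mp hcν
      · intro hcont
        obtain ⟨ν, hν⟩ := hne
        exact hcontmono ν hν χ (((hcS hν).2 χ hχ).mpr hcont)
  obtain ⟨μ, hμτ, hμmax⟩ := zorn_le_nonempty₀ (α := (AddGroupTopology G)ᵒᵈ) S
    (fun c hcS hchain y hy => by
      have hchain' : IsChain (· ≤ ·) (OrderDual.ofDual '' c) := by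
        rintro _ ⟨p, hp, rfl⟩ _ ⟨q, hq, rfl⟩ hpq
        rcases hchain (by exact hp) (by exact hq)
            (fun h => hpq (congrArg OrderDual.ofDual h)) with h | h
        · exact Or.inr h
        · exact Or.inl h
      have hsub : (OrderDual.ofDual '' c) ⊆ S := by
        rintro _ ⟨p, hp, rfl⟩; exact hcS hp
      obtain ⟨hmem, hlb⟩ := hInf _ hsub hchain' ⟨OrderDual.ofDual y, y, hy, rfl⟩
      exact ⟨OrderDual.toDual (sInf (OrderDual.ofDual '' c)), hmem,
        fun z hz => hlb (OrderDual.ofDual z) ⟨z, hz, rfl⟩⟩)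
    (OrderDual.toDual τ) hτS
  refine ⟨OrderDual.ofDual μ, hμmax.1.1, hμmax.1.2, ?_⟩
  rintro ⟨ν, hν1, hν2, hopen, hne⟩
  have hνle : ν ≤ OrderDual.ofDual μ := by
    rw [← AddGroupTopology.toTopologicalSpace_le]
    exact fun U hU => hopen U hU
  have hνS : ν ∈ S := ⟨hν1, hν2⟩
  have h2 : OrderDual.ofDual μ ≤ ν := hμmax.2 hνS hνle
  exact hne (congrArg AddGroupTopology.toTopologicalSpace (le_antisymm h2 hνle))


end
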